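/- Let q ≥ 1, let Σ be a symmetric positive definite q×q real matrix, let 0 < a < q/2, and let x ∈ ℝ^q with x ≠ 0. Then p_eg(x; Σ, a, 2) = ∫_0^1 [Γ(q/2) / (Γ(q/2 − a) Γ(a))] · (1 − u)^(q/2 − a − 1) · u^(a − 1) · (2π)^(−q/2) · det(u·Σ)^(−1/2) · exp(−xᵀΣ⁻¹x / (2u)) du; that is, the EG density with b = 2 is a mixture of centered Gaussian densities with covariances u·Σ, where the scale u has a Beta(q/2 − a, a) density. -/

import Mathlib

open Matrix Classical
open MeasureTheory

/-- Principal (symmetric positive semidefinite) square root of a matrix;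
junk value `0` if the matrix is not positive semidefinite. -/
noncomputable def matSqrt {q : ℕ} (A : Matrix (Fin q) (Fin q) ℝ) : Matrix (Fin q) (Fin q) ℝ :=
  if h : A.PosSemidef then
    (h.1.eigenvectorUnitary : Matrix (Fin q) (Fin q) ℝ) * diagonal (Real.sqrt ∘ h.1.eigenvalues) *
      (star h.1.eigenvectorUnitary : Matrix (Fin q) (Fin q) ℝ) else 0

/-- Loewner order: `loewnerLE A B` iff `B - A` is positive semidefinite. -/
def loewnerLE {q : ℕ} (A B : Matrix (Fin q) (Fin q) ℝ) : Prop := (B - A).PosSemidef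

/-- Largest eigenvalue of a (Hermitian) matrix; junk value `0` otherwise. -/
noncomputable def maxEig {q : ℕ} (A : Matrix (Fin q) (Fin q) ℝ) : ℝ :=
  if h : A.IsHermitian then ⨆ i, h.eigenvalues i else 0

/-- Smallest eigenvalue of a (Hermitian) matrix; junk value `0` otherwise. -/
noncomputable def minEig {q : ℕ} (A : Matrix (Fin q) (Fin q) ℝ) : ℝ :=
  if h : A.IsHermitian then ⨅ i, h.eigenvalues i else 0

/-- The elliptical gamma density
`p_eg(x; Σ, a, b) = Γ(q/2) / (π^(q/2) Γ(a) b^a det(Σ)^(1/2)) (xᵀΣ⁻¹x)^(a-q/2) exp(-xᵀΣ⁻¹x/b)`. -/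
noncomputable def pEG {q : ℕ} (S : Matrix (Fin q) (Fin q) ℝ) (a b : ℝ) (x : Fin q → ℝ) : ℝ :=
  Real.Gamma ((q : ℝ) / 2) /
    (Real.pi ^ ((q : ℝ) / 2) * Real.Gamma a * b ^ a * S.det ^ ((1 : ℝ) / 2)) *
    (x ⬝ᵥ S⁻¹ *ᵥ x) ^ (a - (q : ℝ) / 2) * Real.exp (-(x ⬝ᵥ S⁻¹ *ᵥ x) / b)

lemma key_integral {c t : ℝ} (hc : 0 < c) (ht : 0 < t) :
    ∫ u in Set.Ioo (0:ℝ) 1, (1-u) ^ (c-1) * u ^ (-c-1) * Real.exp (-t/(2*u))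
      = Real.Gamma c * (2/t) ^ c * Real.exp (-t/2) := by
  have himg : (fun v : ℝ => (1+v)⁻¹) '' Set.Ioi 0 = Set.Ioo 0 1 := by
    ext u
    simp only [Set.mem_image, Set.mem_Ioi, Set.mem_Ioo]
    constructor
    · rintro ⟨v, hv, rfl⟩
      exact ⟨inv_pos.mpr (by linarith), inv_lt_one_of_one_lt₀ (by linarith)⟩
    · rintro ⟨h0, h1⟩
      refine ⟨u⁻¹ - 1, by simpa using one_lt_inv₀ h0 |>.mpr h1, ?_⟩
      have : 1 + (u⁻¹ - 1) = u⁻¹ := by ring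
      rw [this, inv_inv]
  have hderiv : ∀ v ∈ Set.Ioi (0:ℝ),
      HasDerivWithinAt (fun v : ℝ => (1+v)⁻¹) (-1/(1+v)^2) (Set.Ioi 0) v := by
    intro v hv
    have hv' : (0:ℝ) < v := hv
    have h : HasDerivAt (fun v : ℝ => (1+v)⁻¹) (-1/(1+v)^2) v := by
      exact ((hasDerivAt_id v).const_add 1).inv (by show (1:ℝ) + v ≠ 0; positivity)
    exact h.hasDerivWithinAt
  have hinj : Set.InjOn (fun v : ℝ => (1+v)⁻¹) (Set.Ioi 0) := by
    intro v hv w hw h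
    have : (1:ℝ) + v = 1 + w := inv_inj.mp h
    linarith
  rw [← himg, integral_image_eq_integral_abs_deriv_smul measurableSet_Ioi hderiv hinj]
  have hcong : ∀ v ∈ Set.Ioi (0:ℝ),
      |(-1/(1+v)^2)| • ((1 - (1+v)⁻¹) ^ (c-1) * ((1+v)⁻¹) ^ (-c-1) * Real.exp (-t/(2*(1+v)⁻¹)))
        = Real.exp (-t/2) * (v ^ (c-1) * Real.exp (-(t/2 * v))) := by
    intro v hv
    have hv' : (0:ℝ) < v := hv
    have hw : (0:ℝ) < 1 + v := by linarith
    have habs : |(-1/(1+v)^2)| = (1+v) ^ (-(2:ℝ)) := by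
      rw [abs_div, abs_neg, abs_one, abs_of_pos (by positivity),
        Real.rpow_neg hw.le, Real.rpow_two, sq]
      ring_nf
    have h1 : 1 - (1+v)⁻¹ = v / (1+v) := by field_simp; ring
    have h2 : (1 - (1+v)⁻¹) ^ (c-1) = v ^ (c-1) * (1+v) ^ (-(c-1)) := by
      rw [h1, Real.div_rpow hv'.le hw.le, Real.rpow_neg hw.le, div_eq_mul_inv]
    have h3 : ((1+v)⁻¹ : ℝ) ^ (-c-1) = (1+v) ^ (c+1) := by
      rw [Real.inv_rpow hw.le, ← Real.rpow_neg hw.le, show -(-c-1) = c+1 by ring]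
    have h4 : -t/(2*(1+v)⁻¹) = -t/2 + -(t/2 * v) := by
      field_simp
      ring
    rw [smul_eq_mul, habs, h2, h3, h4, Real.exp_add]
    have h5 : (1+v) ^ (-(2:ℝ)) * (1+v) ^ (-(c-1)) * (1+v) ^ (c+1) = 1 := by
      rw [← Real.rpow_add hw, ← Real.rpow_add hw,
        show (-(2:ℝ) + -(c-1) + (c+1)) = 0 by ring, Real.rpow_zero]
    calc (1+v) ^ (-(2:ℝ)) * (v ^ (c-1) * (1+v) ^ (-(c-1)) * (1+v) ^ (c+1) *
          (Real.exp (-t/2) * Real.exp (-(t/2*v))))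
        = ((1+v) ^ (-(2:ℝ)) * (1+v) ^ (-(c-1)) * (1+v) ^ (c+1)) *
          (v ^ (c-1) * (Real.exp (-t/2) * Real.exp (-(t/2*v)))) := by ring
      _ = Real.exp (-t/2) * (v ^ (c-1) * Real.exp (-(t/2 * v))) := by rw [h5]; ring
  rw [setIntegral_congr_fun measurableSet_Ioi hcong, integral_const_mul]
  have := Real.integral_rpow_mul_exp_neg_mul_Ioi hc (by positivity : (0:ℝ) < t/2)
  rw [this]
  have : (1 / (t/2) : ℝ) = 2 / t := by field_simp
  rw [this]
  ring

/-- For `0 < a < q/2` and `b = 2`, the elliptical gamma density is a mixture of centered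
Gaussian densities with covariances `u·Σ`, where the scale `u` has a `Beta(q/2 − a, a)`
density on `(0, 1)`. -/
theorem pEG_eq_beta_mixture_of_gaussians {q : ℕ} (hq : 1 ≤ q)
    {S : Matrix (Fin q) (Fin q) ℝ} (hS : S.PosDef)
    {a : ℝ} (ha : 0 < a) (haq : a < (q : ℝ) / 2)
    (x : Fin q → ℝ) (hx : x ≠ 0) :
    pEG S a 2 x = ∫ u in Set.Ioo (0 : ℝ) 1,
      Real.Gamma ((q : ℝ) / 2) / (Real.Gamma ((q : ℝ) / 2 - a) * Real.Gamma a) *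
        ((1 - u) ^ ((q : ℝ) / 2 - a - 1) * u ^ (a - 1)) *
        ((2 * Real.pi) ^ (-(q : ℝ) / 2) * (Matrix.det (u • S)) ^ (-(1 : ℝ) / 2) *
          Real.exp (-(x ⬝ᵥ S⁻¹ *ᵥ x) / (2 * u))) := by
  set t := x ⬝ᵥ S⁻¹ *ᵥ x with htdef
  have ht : 0 < t := by simpa using hS.inv.dotProduct_mulVec_pos hx
  set c : ℝ := (q : ℝ) / 2 - a with hcdef
  have hc : 0 < c := by simp [hcdef]; linarith
  have hd : 0 < S.det := hS.det_pos
  set C : ℝ := Real.Gamma ((q : ℝ) / 2) / (Real.Gamma c * Real.Gamma a) *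
      ((2 * Real.pi) ^ (-(q : ℝ) / 2) * S.det ^ (-(1:ℝ)/2)) with hCdef
  have hcong : ∀ u ∈ Set.Ioo (0:ℝ) 1,
      Real.Gamma ((q : ℝ) / 2) / (Real.Gamma ((q : ℝ) / 2 - a) * Real.Gamma a) *
        ((1 - u) ^ ((q : ℝ) / 2 - a - 1) * u ^ (a - 1)) *
        ((2 * Real.pi) ^ (-(q : ℝ) / 2) * (Matrix.det (u • S)) ^ (-(1 : ℝ) / 2) *
          Real.exp (-t / (2 * u)))
      = C * ((1-u) ^ (c-1) * u ^ (-c-1) * Real.exp (-t/(2*u))) := by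
    intro u hu
    obtain ⟨hu0, hu1⟩ := hu
    have h1 : (Matrix.det (u • S)) ^ (-(1:ℝ)/2) = u ^ (-(q:ℝ)/2) * S.det ^ (-(1:ℝ)/2) := by
      rw [Matrix.det_smul, Fintype.card_fin, Real.mul_rpow (by positivity) hd.le,
        ← Real.rpow_natCast u q, ← Real.rpow_mul hu0.le,
        show (q:ℝ) * (-(1:ℝ)/2) = -(q:ℝ)/2 by ring]
    have h2 : u ^ (a - 1) * u ^ (-(q:ℝ)/2) = u ^ (-c-1) := by
      rw [← Real.rpow_add hu0, show a - 1 + -(q:ℝ)/2 = -c-1 by rw [hcdef]; ring]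
    calc Real.Gamma ((q : ℝ) / 2) / (Real.Gamma ((q : ℝ) / 2 - a) * Real.Gamma a) *
        ((1 - u) ^ ((q : ℝ) / 2 - a - 1) * u ^ (a - 1)) *
        ((2 * Real.pi) ^ (-(q : ℝ) / 2) * (Matrix.det (u • S)) ^ (-(1 : ℝ) / 2) *
          Real.exp (-t / (2 * u)))
        = C * ((1-u) ^ (c-1) * (u ^ (a-1) * u ^ (-(q:ℝ)/2)) * Real.exp (-t/(2*u))) := by
          rw [h1, hCdef, hcdef]; ring
      _ = C * ((1-u) ^ (c-1) * u ^ (-c-1) * Real.exp (-t/(2*u))) := by rw [h2]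
  rw [setIntegral_congr_fun measurableSet_Ioo hcong, integral_const_mul,
    key_integral hc ht]
  -- now a scalar identity
  have hP : (0:ℝ) < Real.pi ^ ((q:ℝ)/2) := by positivity
  have hGa : Real.Gamma a ≠ 0 := (Real.Gamma_pos_of_pos ha).ne'
  have hGc : Real.Gamma c ≠ 0 := (Real.Gamma_pos_of_pos hc).ne'
  have e1 : ((2:ℝ) * Real.pi) ^ (-(q:ℝ)/2)
      = (2:ℝ) ^ (-(q:ℝ)/2) * Real.pi ^ (-(q:ℝ)/2) :=
    Real.mul_rpow (by norm_num) Real.pi_nonneg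
  have e2 : Real.pi ^ (-(q:ℝ)/2) = (Real.pi ^ ((q:ℝ)/2))⁻¹ := by
    rw [neg_div, Real.rpow_neg Real.pi_nonneg]
  have e3 : S.det ^ (-(1:ℝ)/2) = (S.det ^ ((1:ℝ)/2))⁻¹ := by
    rw [neg_div, Real.rpow_neg hd.le]
  have e4 : ((2:ℝ)/t) ^ c = (2:ℝ) ^ c * (t ^ c)⁻¹ := by
    rw [Real.div_rpow (by norm_num) ht.le, div_eq_mul_inv]
  have e5 : (2:ℝ) ^ (-(q:ℝ)/2) * (2:ℝ) ^ c = ((2:ℝ) ^ a)⁻¹ := by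
    rw [← Real.rpow_add two_pos, show -(q:ℝ)/2 + c = -a by rw [hcdef]; ring,
      Real.rpow_neg (by norm_num)]
  have e6 : t ^ (a - (q:ℝ)/2) = (t ^ c)⁻¹ := by
    rw [show a - (q:ℝ)/2 = -c by rw [hcdef]; ring, Real.rpow_neg ht.le]
  rw [pEG, ← htdef, e6, hCdef, e1, e2, e3, e4]
  have hT : t ^ c ≠ 0 := by positivity
  have hD : S.det ^ ((1:ℝ)/2) ≠ 0 := by positivity
  have h2a : (2:ℝ) ^ a ≠ 0 := by positivity
  have hGcc : Real.Gamma c * (Real.Gamma c)⁻¹ = 1 := mul_inv_cancel₀ hGc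
  linear_combination
    (-(Real.Gamma ((q:ℝ)/2) * (Real.Gamma a)⁻¹ * (Real.pi ^ ((q:ℝ)/2))⁻¹ *
        (S.det ^ ((1:ℝ)/2))⁻¹ * (t ^ c)⁻¹ * Real.exp (-t/2)) * ((2:ℝ) ^ a)⁻¹) * hGcc +
    (-(Real.Gamma ((q:ℝ)/2) * (Real.Gamma a)⁻¹ * (Real.pi ^ ((q:ℝ)/2))⁻¹ *
        (S.det ^ ((1:ℝ)/2))⁻¹ * (t ^ c)⁻¹ * Real.exp (-t/2)) *
      (Real.Gamma c * (Real.Gamma c)⁻¹)) * e5
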